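/- Let H be a real symmetric (N+2)×(N+2) matrix with blocks H_{S̄S̄} (N×N), coupling C = H_{S̄S} (N×2) and diagonal H_{SS} = E·I₂ on the last two coordinates u, v. Define the (N+4)×(N+4) matrix H_m with blocks: H_{S̄S̄}, couplings (1/√2)C to each of two copies of S, diagonal block H_{SS} = E·I₂ on each copy, and zero coupling between the copies. Then for every eigenvector (w, x_u, x_v)ᵀ of H with eigenvalue λ, the vector (w, x_u/√2, x_v/√2, x_u/√2, x_v/√2)ᵀ is an eigenvector of H_m with the same eigenvalue λ. -/
import Mathlib


open Matrix

/-- The original Hamiltonian: cloud `D`, coupling `C = H_{S̄S}` to the pair `S = {u,v}`,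
diagonal block `E • I₂` on `S` (no direct `u`–`v` coupling). -/
def origH {β : Type} [Fintype β] [DecidableEq β]
    (D : Matrix β β ℝ) (C : Matrix β (Fin 2) ℝ) (E : ℝ) :
    Matrix (β ⊕ Fin 2) (β ⊕ Fin 2) ℝ :=
  Matrix.fromBlocks D C Cᵀ (E • 1)

/-- Coupling block from the cloud to the two dimer copies, scaled by `1/√2`. -/
noncomputable def dimerC {β : Type} (C : Matrix β (Fin 2) ℝ) : Matrix β (Fin 2 ⊕ Fin 2) ℝ :=
  Matrix.of fun i s =>
    Sum.elim (fun a => C i a / Real.sqrt 2) (fun a => C i a / Real.sqrt 2) s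

/-- The dimerized Hamiltonian `H_m`: each of `u`, `v` is replaced by a dimer, with
couplings scaled by `1/√2`, on-site energy `E` on each dimer site, and no coupling
between the copies. -/
noncomputable def dimerH {β : Type} [Fintype β] [DecidableEq β]
    (D : Matrix β β ℝ) (C : Matrix β (Fin 2) ℝ) (E : ℝ) :
    Matrix (β ⊕ (Fin 2 ⊕ Fin 2)) (β ⊕ (Fin 2 ⊕ Fin 2)) ℝ :=
  Matrix.fromBlocks D (dimerC C) (dimerC C)ᵀ
    (Matrix.fromBlocks (E • 1) 0 0 (E • 1))

/-- Every eigenvector `(w, x_u, x_v)ᵀ` of `H` lifts to an eigenvector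
`(w, x_u/√2, x_v/√2, x_u/√2, x_v/√2)ᵀ` of the dimerized `H_m` with the same eigenvalue. -/
theorem dimerized_eigenvector {β : Type} [Fintype β] [DecidableEq β]
    (D : Matrix β β ℝ) (hD : D.IsSymm) (C : Matrix β (Fin 2) ℝ) (E lam : ℝ)
    (w : β → ℝ) (xu xv : ℝ)
    (hx : (origH D C E).mulVec (Sum.elim w ![xu, xv]) =
      lam • Sum.elim w ![xu, xv]) :
    (dimerH D C E).mulVec
        (Sum.elim w (Sum.elim ![xu / Real.sqrt 2, xv / Real.sqrt 2]
          ![xu / Real.sqrt 2, xv / Real.sqrt 2])) =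
      lam • Sum.elim w (Sum.elim ![xu / Real.sqrt 2, xv / Real.sqrt 2]
          ![xu / Real.sqrt 2, xv / Real.sqrt 2]) := by
  have hs : Real.sqrt 2 * Real.sqrt 2 = 2 := Real.mul_self_sqrt (by norm_num)
  have hu := congrFun hx (Sum.inr 0)
  have hv := congrFun hx (Sum.inr 1)
  simp [origH, Matrix.mulVec, dotProduct, Fintype.sum_sum_type,
    Matrix.fromBlocks, Fin.sum_univ_two, Matrix.one_apply] at hu hv
  funext z
  rcases z with i | (a | a)
  · have hi := congrFun hx (Sum.inl i)
    simp [origH, dimerH, dimerC, Matrix.mulVec, dotProduct,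
      Fintype.sum_sum_type, Matrix.fromBlocks, Fin.sum_univ_two] at hi ⊢
    simp only [div_mul_div_comm, hs]
    linarith [hi]
  · fin_cases a <;>
    · simp [dimerH, dimerC, Matrix.mulVec, dotProduct, Fintype.sum_sum_type,
        Matrix.fromBlocks, Fin.sum_univ_two, Matrix.one_apply]
      simp_rw [div_mul_eq_mul_div, ← Finset.sum_div]
      first
        | linear_combination hu / Real.sqrt 2
        | linear_combination hv / Real.sqrt 2
  · fin_cases a <;>
    · simp [dimerH, dimerC, Matrix.mulVec, dotProduct, Fintype.sum_sum_type,
        Matrix.fromBlocks, Fin.sum_univ_two, Matrix.one_apply]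
      simp_rw [div_mul_eq_mul_div, ← Finset.sum_div]
      first
        | linear_combination hu / Real.sqrt 2
        | linear_combination hv / Real.sqrt 2
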